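/- Let A = (a, (u+1)*a + d, ((s+1)*u + 1)*a + (s+1)*d), where d is a positive integer, gcd(a, d) = 1, a ≥ 2, u is a positive integer, and u + 1 ≥ s ≥ 1. Let p be a positive divisor of a with p ≠ a. Then the genus of the quotient is g(⟨A⟩/p) = (a/p − 1) * (u*a + a + d − 1)/2 − s * Σ_{r=1}^{a/p − 1} ⌊r*p/(s+1)⌋. -/

import Mathlib

private def Cf (u s t : ℕ) : ℕ := u * t + t % (s + 1) + t / (s + 1)
private def ff (a u s d t : ℕ) : ℕ := a * Cf u s t + d * t

private lemma Cf_le (u s y w : ℕ) :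
    Cf u s (y + (s + 1) * w) ≤ (u + 1) * y + ((s + 1) * u + 1) * w := by
  unfold Cf
  rw [Nat.add_mul_div_left _ _ (Nat.succ_pos s), Nat.add_mul_mod_self_left]
  have h3 : y % (s + 1) + y / (s + 1) ≤ y := by
    have h := Nat.mod_add_div y (s + 1)
    have h4 : y / (s + 1) ≤ (s + 1) * (y / (s + 1)) := Nat.le_mul_of_pos_left _ (Nat.succ_pos s)
    omega
  nlinarith [h3]


private lemma mem_iff' (a u s d m : ℕ) :
    (∃ x y w : ℕ, m = x * a + y * ((u + 1) * a + d) +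
        w * (((s + 1) * u + 1) * a + (s + 1) * d)) ↔
    ∃ t k : ℕ, m = ff a u s d t + a * k := by
  constructor
  · rintro ⟨x, y, w, rfl⟩
    refine ⟨y + (s + 1) * w,
      x + ((u + 1) * y + ((s + 1) * u + 1) * w - Cf u s (y + (s + 1) * w)), ?_⟩
    have hE := Cf_le u s y w
    have key : y * ((u + 1) * a + d) + w * (((s + 1) * u + 1) * a + (s + 1) * d)
        = a * ((u + 1) * y + ((s + 1) * u + 1) * w) + d * (y + (s + 1) * w) := by ring
    unfold ff
    zify [hE]
    ring
  · rintro ⟨t, k, rfl⟩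
    refine ⟨k, t % (s + 1), t / (s + 1), ?_⟩
    unfold ff Cf
    set v := t / (s + 1) with hv
    set z := t % (s + 1) with hz
    have h : (s + 1) * v + z = t := Nat.div_add_mod t (s + 1)
    zify
    have h' : ((s : ℤ) + 1) * v + z = t := by exact_mod_cast h
    linear_combination (-((a : ℤ) * u + d)) * h'

private lemma ff_mono (a u s d t j : ℕ) (ha : 2 ≤ a) (hu : 1 ≤ u) (hsu : s ≤ u + 1) :
    ff a u s d t ≤ ff a u s d (t + a * j) := by
  rcases Nat.eq_zero_or_pos j with hj | hj
  · simp [hj]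
  have hC : Cf u s t ≤ Cf u s (t + a * j) := by
    unfold Cf
    have h1 : t % (s + 1) ≤ s := Nat.lt_succ_iff.mp (Nat.mod_lt _ (Nat.succ_pos s))
    have h2 : t / (s + 1) ≤ (t + a * j) / (s + 1) := Nat.div_le_div_right (by omega)
    have h3 : (t + a * j) % (s + 1) ≥ 0 := Nat.zero_le _
    have haj : 2 ≤ a * j := le_trans ha (Nat.le_mul_of_pos_right a hj)
    have h4 : s ≤ u * (a * j) := le_trans (by omega : s ≤ u * 2) (Nat.mul_le_mul_left u haj)
    nlinarith
  unfold ff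
  have := Nat.mul_le_mul_left a hC
  have hd : d * t ≤ d * (t + a * j) := Nat.mul_le_mul_left d (by omega)
  omega

private lemma Cf_cast (u s t : ℕ) :
    (Cf u s t : ℤ) = (u + 1) * t - s * ((t / (s + 1) : ℕ) : ℤ) := by
  unfold Cf
  set v := t / (s + 1) with hv
  set z := t % (s + 1) with hz
  have h : ((s : ℤ) + 1) * (v : ℤ) + (z : ℤ) = (t : ℤ) := by
    exact_mod_cast Nat.div_add_mod t (s + 1)
  push_cast
  linarith [h]

/-- For `A = (a, (u+1)a + d, ((s+1)u + 1)a + (s+1)d)` with `d ≥ 1`,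
`gcd(a,d) = 1`, `a ≥ 2`, `u + 1 ≥ s ≥ 1`, and `p` a positive divisor of `a`, `p ≠ a`:
`g(⟨A⟩/p) = (a/p − 1)·(u·a + a + d − 1)/2 − s·Σ_{r=1}^{a/p−1} ⌊r·p/(s+1)⌋`.
(The identity is stated after multiplication by 2.) -/
theorem stmt_9 (a u s d p : ℕ)
    (ha : 2 ≤ a) (hd : 1 ≤ d) (hu : 1 ≤ u) (hs : 1 ≤ s) (hsu : s ≤ u + 1)
    (hgcd : Nat.gcd a d = 1)
    (hp : 0 < p) (hpa : p ∣ a) (hpne : p ≠ a) :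
    2 * (({n : ℕ | 0 < n ∧ ¬ ∃ x y w : ℕ,
        p * n = x * a + y * ((u + 1) * a + d) +
          w * (((s + 1) * u + 1) * a + (s + 1) * d)}).ncard : ℤ)
      = (((a / p : ℕ) : ℤ) - 1) * ((u : ℤ) * a + a + d - 1) -
        2 * s * ∑ r ∈ Finset.Icc 1 (a / p - 1), ((r * p / (s + 1) : ℕ) : ℤ) := by
  obtain ⟨q, hq⟩ := hpa
  have hq1 : a / p = q := by rw [hq]; exact Nat.mul_div_cancel_left q hp
  have hq2 : 2 ≤ q := by
    rcases Nat.lt_or_ge q 2 with h | h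
    · interval_cases q
      · omega
      · exact absurd (by omega : p = a) hpne
    · exact h
  have hqpos : 0 < q := by omega
  have hdq : Nat.Coprime q d := Nat.Coprime.coprime_dvd_left ⟨p, by rw [hq]; ring⟩ hgcd
  obtain ⟨e, -, he⟩ := Nat.exists_mul_mod_eq_one_of_coprime
    (Nat.coprime_comm.mp hdq) (by omega)
  set N : ℕ → ℕ := fun r => q * Cf u s (r * p) + d * r with hN
  set K : ℕ → ℕ := fun r => Cf u s (r * p) + d * r / q with hK
  have hNK : ∀ r, q * K r + d * r % q = N r := by
    intro r
    calc q * K r + d * r % q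
        = q * Cf u s (r * p) + (q * (d * r / q) + d * r % q) := by simp only [hK]; ring
      _ = q * Cf u s (r * p) + d * r := by rw [Nat.div_add_mod]
      _ = N r := rfl
  have hpN : ∀ r, p * N r = ff a u s d (r * p) := by
    intro r; simp only [hN]; unfold ff; rw [hq]; ring
  have hset : {n : ℕ | 0 < n ∧ ¬ ∃ x y w : ℕ,
        p * n = x * a + y * ((u + 1) * a + d) +
          w * (((s + 1) * u + 1) * a + (s + 1) * d)} =
      ↑((Finset.Icc 1 (q - 1)).biUnion
        (fun r => (Finset.Icc 1 (K r)).image (fun m => N r - q * m))) := by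
    ext n
    simp only [Set.mem_setOf_eq, Finset.coe_biUnion, Set.mem_iUnion, Finset.mem_coe,
      Finset.mem_image, Finset.mem_Icc, mem_iff']
    constructor
    · rintro ⟨hn, hnot⟩
      set r := e * n % q with hr
      have hrq : r < q := Nat.mod_lt _ hqpos
      have hde : d * e ≡ 1 [MOD q] := by
        unfold Nat.ModEq; rw [he, Nat.mod_eq_of_lt (by omega)]
      have hr1 : d * r ≡ n [MOD q] := by
        have h1 : d * r ≡ d * (e * n) [MOD q] := Nat.ModEq.mul_left d (Nat.mod_modEq (e * n) q)
        have h3 : d * e * n ≡ 1 * n [MOD q] := Nat.ModEq.mul_right n hde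
        refine h1.trans ?_
        rw [← mul_assoc]
        simpa using h3
      have hr0 : r ≠ 0 := by
        intro h0
        rw [h0, mul_zero] at hr1
        have hnq : n % q = 0 := by
          have := hr1.symm
          unfold Nat.ModEq at this
          simpa using this
        obtain ⟨c, hc⟩ := Nat.dvd_of_mod_eq_zero hnq
        exact hnot ⟨0, c, by simp [ff, Cf, hc, hq]; ring⟩
      have hNrq : N r % q = d * r % q := by
        simp only [hN]; exact Nat.mul_add_mod q _ _
      have hnN : n ≡ N r [MOD q] := by unfold Nat.ModEq; rw [hNrq]; exact hr1.symm
      have hnlt : n < N r := by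
        by_contra hge
        push_neg at hge
        obtain ⟨k, hk⟩ := (Nat.modEq_iff_dvd' hge).mp hnN.symm
        apply hnot
        refine ⟨r * p, k, ?_⟩
        have hn' : n = N r + q * k := by omega
        rw [hn', ← hpN r, hq]; ring
      obtain ⟨m, hm⟩ := (Nat.modEq_iff_dvd' hnlt.le).mp hnN
      have hm1 : 1 ≤ m := by
        rcases Nat.eq_zero_or_pos m with h0 | h0
        · rw [h0, mul_zero] at hm; omega
        · exact h0
      have hm2 : m ≤ K r := by
        have h5 : d * r % q ≤ n := by
          have h7 : n % q = d * r % q := by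
            have h8 : n % q = N r % q := hnN
            rw [h8, hNrq]
          calc d * r % q = n % q := h7.symm
            _ ≤ n := Nat.mod_le n q
        have h6 : q * m ≤ q * K r := by have := hNK r; omega
        exact Nat.le_of_mul_le_mul_left h6 hqpos
      exact ⟨r, ⟨by omega, by omega⟩, m, ⟨hm1, hm2⟩, by omega⟩
    · rintro ⟨r, ⟨hr1', hr2'⟩, m, ⟨hm1, hm2⟩, rfl⟩
      have hrq : r < q := by omega
      have hj1 : 1 ≤ d * r % q := by
        rcases Nat.eq_zero_or_pos (d * r % q) with h0 | h0
        · exfalso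
          have hqr : q ∣ r :=
            (Nat.Coprime.dvd_of_dvd_mul_left hdq (Nat.dvd_of_mod_eq_zero h0))
          have := Nat.eq_zero_of_dvd_of_lt hqr hrq
          omega
        · exact h0
      have hKN := hNK r
      have hqm : q * m ≤ q * K r := Nat.mul_le_mul_left q hm2
      refine ⟨by omega, ?_⟩
      rintro ⟨t, k, hk⟩
      have hpn : p * (N r - q * m) = ff a u s d (r * p) - a * m := by
        rw [Nat.mul_sub, hpN r, hq]
        congr 1
        ring
      have ham : a * m ≤ ff a u s d (r * p) := by
        rw [← hpN r, hq]
        calc p * q * m = p * (q * m) := by ring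
          _ ≤ p * N r := Nat.mul_le_mul_left p (by omega)
      have heq : ff a u s d t + a * k + a * m = ff a u s d (r * p) := by omega
      have hmod : d * t ≡ d * (r * p) [MOD a] := by
        have h1 : ff a u s d t % a = d * t % a := Nat.mul_add_mod a _ _
        have h2 : ff a u s d (r * p) % a = d * (r * p) % a := Nat.mul_add_mod a _ _
        have h3 : ff a u s d (r * p) % a = ff a u s d t % a := by
          rw [← heq]
          have : ff a u s d t + a * k + a * m = ff a u s d t + a * (k + m) := by ring
          rw [this, Nat.add_mul_mod_self_left]
        unfold Nat.ModEq
        omega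
      have htr : t ≡ r * p [MOD a] := hmod.cancel_left_of_coprime hgcd
      have hrpa : r * p < a := by
        rw [hq, mul_comm p q]
        exact (Nat.mul_lt_mul_right hp).mpr hrq
      have hge2 : r * p ≤ t := by
        by_contra hlt
        push_neg at hlt
        have hdvd := (Nat.modEq_iff_dvd' hlt.le).mp htr
        have := Nat.eq_zero_of_dvd_of_lt hdvd (by omega)
        omega
      obtain ⟨j, hj⟩ := (Nat.modEq_iff_dvd' hge2).mp htr.symm
      have ht' : t = r * p + a * j := by omega
      have hmono := ff_mono a u s d (r * p) j ha hu hsu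
      rw [← ht'] at hmono
      have ham2 : a ≤ a * m := Nat.le_mul_of_pos_right a hm1
      omega
  have key_mod : ∀ r m : ℕ, m ≤ K r → (N r - q * m) % q = d * r % q := by
    intro r m hm
    have h1 := hNK r
    have h2 : q * m ≤ q * K r := Nat.mul_le_mul_left q hm
    have h3 : N r - q * m = q * (K r - m) + d * r % q := by
      rw [Nat.mul_sub]; omega
    rw [h3, Nat.mul_add_mod, Nat.mod_mod_of_dvd _ dvd_rfl]
  have hdisj : ∀ r1 ∈ Finset.Icc 1 (q - 1), ∀ r2 ∈ Finset.Icc 1 (q - 1), r1 ≠ r2 →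
      Disjoint ((Finset.Icc 1 (K r1)).image fun m => N r1 - q * m)
        ((Finset.Icc 1 (K r2)).image fun m => N r2 - q * m) := by
    intro r1 h1 r2 h2 hne
    rw [Finset.disjoint_left]
    rintro x hx1 hx2
    simp only [Finset.mem_image, Finset.mem_Icc] at hx1 hx2
    obtain ⟨m1, hm1, hxe1⟩ := hx1
    obtain ⟨m2, hm2, hxe2⟩ := hx2
    simp only [Finset.mem_Icc] at h1 h2
    have e1 : x % q = d * r1 % q := by rw [← hxe1]; exact key_mod r1 m1 hm1.2
    have e2 : x % q = d * r2 % q := by rw [← hxe2]; exact key_mod r2 m2 hm2.2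
    have hmm : d * r1 ≡ d * r2 [MOD q] := by unfold Nat.ModEq; omega
    have hrr : r1 ≡ r2 [MOD q] := hmm.cancel_left_of_coprime hdq
    have hre : r1 % q = r2 % q := hrr
    rw [Nat.mod_eq_of_lt (by omega), Nat.mod_eq_of_lt (by omega)] at hre
    exact hne hre
  have hcard : ((Finset.Icc 1 (q - 1)).biUnion
      (fun r => (Finset.Icc 1 (K r)).image (fun m => N r - q * m))).card
      = ∑ r ∈ Finset.Icc 1 (q - 1), K r := by
    rw [Finset.card_biUnion hdisj]
    refine Finset.sum_congr rfl fun r hr => ?_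
    rw [Finset.card_image_of_injOn, Nat.card_Icc]
    · omega
    · intro m1 hm1 m2 hm2 hxe
      simp only [Finset.coe_Icc, Set.mem_Icc] at hm1 hm2
      have hxe' : N r - q * m1 = N r - q * m2 := hxe
      have h1 := hNK r
      have b1 : q * m1 ≤ q * K r := Nat.mul_le_mul_left q hm1.2
      have b2 : q * m2 ≤ q * K r := Nat.mul_le_mul_left q hm2.2
      have hmm : q * m1 = q * m2 := by omega
      exact Nat.eq_of_mul_eq_mul_left hqpos hmm
  rw [hq1, hset, Set.ncard_coe_finset, hcard]
  set I := Finset.Icc 1 (q - 1) with hI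
  -- Gauss sum
  have hT1 : (∑ r ∈ I, (r : ℤ)) * 2 = (q : ℤ) * ((q : ℤ) - 1) := by
    have hn : (∑ r ∈ I, r) * 2 = q * (q - 1) := by
      have hIc : I = Finset.Ico 1 q := by
        ext x; simp only [hI, Finset.mem_Icc, Finset.mem_Ico]; omega
      have hg := Finset.sum_range_id_mul_two q
      rw [Finset.range_eq_Ico] at hg
      rw [hIc, ← hg]
      congr 1
      rw [Finset.sum_eq_sum_Ico_succ_bot (by omega : (0:ℕ) < q)]
      simp
    calc (∑ r ∈ I, (r : ℤ)) * 2 = (((∑ r ∈ I, r) * 2 : ℕ) : ℤ) := by push_cast; ring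
      _ = ((q * (q - 1) : ℕ) : ℤ) := by rw [hn]
      _ = (q : ℤ) * ((q : ℤ) - 1) := by
          push_cast [Nat.cast_sub (by omega : 1 ≤ q)]; ring
  -- mod bijection
  have hqe : Nat.Coprime q e := by
    have h9 : Nat.gcd q (d * e) = 1 := by
      rw [Nat.gcd_rec, he, Nat.gcd_one_left]
    exact Nat.Coprime.coprime_dvd_right ⟨d, mul_comm d e⟩ h9
  have hstep : ∀ c1 c2 : ℕ, c1 * c2 % q = 1 → ∀ x, x < q → c2 * (c1 * x % q) % q = x := by
    intro c1 c2 hc x hx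
    have h1 : c2 * (c1 * x % q) ≡ c2 * (c1 * x) [MOD q] :=
      Nat.ModEq.mul_left c2 (Nat.mod_modEq _ q)
    have h3 : c1 * c2 * x ≡ 1 * x [MOD q] :=
      Nat.ModEq.mul_right x (by unfold Nat.ModEq; rw [hc, Nat.mod_eq_of_lt (by omega)])
    have h4 : c2 * (c1 * x % q) ≡ x [MOD q] := by
      refine h1.trans ?_
      have h2 : c2 * (c1 * x) = c1 * c2 * x := by ring
      rw [h2]
      simpa using h3
    have h5 : c2 * (c1 * x % q) % q = x % q := h4
    rw [h5, Nat.mod_eq_of_lt hx]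
  have hmodmem : ∀ c1 c2 : ℕ, c1 * c2 % q = 1 → ∀ x ∈ I, c1 * x % q ∈ I := by
    intro c1 c2 hc x hx
    simp only [hI, Finset.mem_Icc] at hx ⊢
    have hlt : c1 * x % q < q := Nat.mod_lt _ hqpos
    have hne0 : c1 * x % q ≠ 0 := by
      intro h0
      have := hstep c1 c2 hc x (by omega)
      rw [h0, mul_zero, Nat.zero_mod] at this
      omega
    omega
  have hbij : ∑ r ∈ I, ((d * r % q : ℕ) : ℤ) = ∑ r ∈ I, (r : ℤ) := by
    refine Finset.sum_nbij' (fun r => d * r % q) (fun x => e * x % q)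
      (hmodmem d e he) (hmodmem e d (by rwa [mul_comm])) ?_ ?_ ?_
    · intro r hr
      simp only [hI, Finset.mem_Icc] at hr
      exact hstep d e he r (by omega)
    · intro x hx
      simp only [hI, Finset.mem_Icc] at hx
      exact hstep e d (by rwa [mul_comm]) x (by omega)
    · intro r hr; rfl
  have hT3q : ((q : ℤ) * ∑ r ∈ I, ((d * r / q : ℕ) : ℤ)) * 2
      = ((d : ℤ) - 1) * ((q : ℤ) * ((q : ℤ) - 1)) := by
    have hterm : ∀ r : ℕ, (q : ℤ) * ((d * r / q : ℕ) : ℤ)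
        = (d : ℤ) * r - ((d * r % q : ℕ) : ℤ) := by
      intro r
      have h := Nat.div_add_mod (d * r) q
      have h2 : (q : ℤ) * ((d * r / q : ℕ) : ℤ) + ((d * r % q : ℕ) : ℤ)
          = (d : ℤ) * r := by exact_mod_cast h
      linarith
    rw [Finset.mul_sum]
    rw [Finset.sum_congr rfl fun r _ => hterm r]
    rw [Finset.sum_sub_distrib, hbij, ← Finset.mul_sum]
    linear_combination ((d : ℤ) - 1) * hT1
  have hSC : ∑ r ∈ I, ((Cf u s (r * p) : ℕ) : ℤ)
      = ((u : ℤ) + 1) * p * (∑ r ∈ I, (r : ℤ))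
        - (s : ℤ) * ∑ r ∈ I, ((r * p / (s + 1) : ℕ) : ℤ) := by
    rw [Finset.mul_sum, Finset.mul_sum, ← Finset.sum_sub_distrib]
    refine Finset.sum_congr rfl fun r _ => ?_
    rw [Cf_cast]
    push_cast
    ring
  have hKsplit : ∀ r : ℕ, ((K r : ℕ) : ℤ)
      = ((Cf u s (r * p) : ℕ) : ℤ) + ((d * r / q : ℕ) : ℤ) := by
    intro r; simp only [hK]; push_cast; ring
  rw [Nat.cast_sum, Finset.sum_congr rfl (fun r _ => hKsplit r), Finset.sum_add_distrib, hSC]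
  have haZ : (a : ℤ) = (p : ℤ) * (q : ℤ) := by exact_mod_cast hq
  have hqZ : (q : ℤ) ≠ 0 := by
    have : (0 : ℤ) < (q : ℤ) := by exact_mod_cast hqpos
    omega
  apply mul_left_cancel₀ hqZ
  linear_combination ((u : ℤ) + 1) * (p : ℤ) * (q : ℤ) * hT1 + hT3q
    + (-((q : ℤ) * ((q : ℤ) - 1) * ((u : ℤ) + 1))) * haZ
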